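/- Let F be a PSD not SOS real form. If s(z)²·F(z) is a sum of squares of real polynomials and every irreducible factor of the form s is indefinite (changes sign on ℝ^d), then F itself is a sum of squares of real polynomials (contradiction form: no such s exists). -/

import Mathlib

open MvPolynomial

/-- A real polynomial is SOS if it is a finite sum of squares of real polynomials. -/
def IsSOS {d : ℕ} (F : MvPolynomial (Fin d) ℝ) : Prop :=
  ∃ (k : ℕ) (h : Fin k → MvPolynomial (Fin d) ℝ), F = ∑ i, (h i) ^ 2

/-- A real form is indefinite if it changes sign on `ℝ^d`. -/
def IsIndefinite {d : ℕ} (s : MvPolynomial (Fin d) ℝ) : Prop :=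
  (∃ x : Fin d → ℝ, 0 < eval x s) ∧ (∃ y : Fin d → ℝ, eval y s < 0)

/-! ### Auxiliary lemmas -/

lemma eval_line {σ : Type*} (q : MvPolynomial σ ℝ) (x₀ v : σ → ℝ) (t : ℝ) :
    Polynomial.eval t (aeval (fun i => Polynomial.C (x₀ i) + Polynomial.C (v i) * Polynomial.X) q)
      = eval (fun i => x₀ i + v i * t) q := by
  induction q using MvPolynomial.induction_on with
  | C a => simp
  | add p q hp hq => simp [hp, hq]
  | mul_X p i hp => simp [hp]

/-- A multivariate real polynomial vanishing on a nonempty open set is zero. -/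
lemma eq_zero_of_eval_zero_on_open {σ : Type*} (q : MvPolynomial σ ℝ)
    (U : Set (σ → ℝ)) (hU : IsOpen U) (x₀ : σ → ℝ) (hx₀ : x₀ ∈ U)
    (h : ∀ x ∈ U, eval x q = 0) : q = 0 := by
  have key : ∀ x, eval x q = 0 := by
    intro x
    set v : σ → ℝ := fun i => x i - x₀ i with hv
    have hcont : Continuous (fun t : ℝ => fun i => x₀ i + v i * t) := by
      apply continuous_pi
      intro i
      continuity
    have hopen : IsOpen ((fun t : ℝ => fun i => x₀ i + v i * t) ⁻¹' U) := hU.preimage hcont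
    have h0 : (0:ℝ) ∈ (fun t : ℝ => fun i => x₀ i + v i * t) ⁻¹' U := by
      simp only [Set.mem_preimage]
      convert hx₀ using 2
      simp
    obtain ⟨ε, hε, hball⟩ := Metric.isOpen_iff.mp hopen 0 h0
    have hroots : (aeval (fun i => Polynomial.C (x₀ i) + Polynomial.C (v i) * Polynomial.X) q : Polynomial ℝ) = 0 := by
      apply Polynomial.eq_zero_of_infinite_isRoot
      apply Set.Infinite.mono (s := Set.Ioo (0:ℝ) (ε/2))
      · intro t ht
        simp only [Set.mem_setOf_eq, Polynomial.IsRoot.def]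
        rw [eval_line]
        apply h
        apply hball
        simp only [Metric.mem_ball, Real.dist_eq, sub_zero]
        rw [abs_of_pos ht.1]
        linarith [ht.2]
      · exact Set.Ioo_infinite (by linarith)
    have h1 := eval_line q x₀ v 1
    rw [hroots] at h1
    simp only [Polynomial.eval_zero] at h1
    have hx : (fun i => x₀ i + v i * 1) = x := by funext i; simp [hv]
    rw [hx] at h1
    exact h1.symm
  exact MvPolynomial.funext (fun x => by rw [key x, map_zero])

/-- A real polynomial changing sign has a real zero. -/
lemma exists_eval_zero_of_sign_change {σ : Type*} (p : MvPolynomial σ ℝ) {a b : σ → ℝ}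
    (ha : 0 < eval a p) (hb : eval b p < 0) : ∃ x, eval x p = 0 := by
  set v : σ → ℝ := fun i => b i - a i with hv
  set Q : Polynomial ℝ := aeval (fun i => Polynomial.C (a i) + Polynomial.C (v i) * Polynomial.X) p with hQ
  have e0 : (fun i => a i + v i * 0) = a := by funext i; simp
  have e1 : (fun i => a i + v i * 1) = b := by funext i; simp [hv]
  have h0 : Polynomial.eval 0 Q = eval a p := by rw [hQ, eval_line, e0]
  have h1 : Polynomial.eval 1 Q = eval b p := by rw [hQ, eval_line, e1]
  have hmem : (0:ℝ) ∈ Set.uIcc (Polynomial.eval 0 Q) (Polynomial.eval 1 Q) := by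
    rw [h0, h1, Set.mem_uIcc]
    right; constructor <;> linarith
  obtain ⟨t₀, _, ht₀⟩ := intermediate_value_uIcc ((Polynomial.continuous Q).continuousOn) hmem
  simp only at ht₀
  refine ⟨fun i => a i + v i * t₀, ?_⟩
  rw [← eval_line p a v t₀, ← hQ, ht₀]

/-- The key algebraic lemma: if a prime polynomial `p` changes sign along the first
coordinate axis and `h` vanishes on the real zero set of `p`, then `p ∣ h`
(stated in contradiction form). -/
lemma key_lemma {n : ℕ} (p h : MvPolynomial (Fin (n+1)) ℝ) (hp : Prime p) (hdvd : ¬ p ∣ h)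
    (hvan : ∀ x, eval x p = 0 → eval x h = 0)
    {t₁ t₂ : ℝ} {c : Fin n → ℝ}
    (hp1 : 0 < eval (Fin.cons t₁ c) p) (hp2 : eval (Fin.cons t₂ c) p < 0) : False := by
  classical
  letI : NormalizationMonoid (MvPolynomial (Fin n) ℝ) :=
    (UniqueFactorizationMonoid.normalizationMonoid :
      StrongNormalizationMonoid (MvPolynomial (Fin n) ℝ)).toNormalizationMonoid
  letI : NormalizedGCDMonoid (MvPolynomial (Fin n) ℝ) :=
    UniqueFactorizationMonoid.toNormalizedGCDMonoid _
  set S := MvPolynomial (Fin n) ℝ with hS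
  set φ := MvPolynomial.finSuccEquiv ℝ n with hφ
  set P : Polynomial S := φ p with hPdef
  set H : Polynomial S := φ h with hHdef
  have hPprime : Prime P := (MulEquiv.prime_iff φ.toRingEquiv.toMulEquiv).mpr hp
  -- degree of P is at least 1
  have hdegmap : 1 ≤ (P.map (eval c)).natDegree := by
    by_contra hlt
    push_neg at hlt
    interval_cases hx : (P.map (eval c)).natDegree
    · obtain ⟨x, hx⟩ := Polynomial.natDegree_eq_zero.mp hx
      have e1 := eval_eq_eval_mv_eval' c t₁ p
      have e2 := eval_eq_eval_mv_eval' c t₂ p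
      rw [← hPdef, ← hx] at e1 e2
      simp only [Polynomial.eval_C] at e1 e2
      linarith [e1 ▸ hp1, e2 ▸ hp2]
  have hdegP : 1 ≤ P.natDegree := le_trans hdegmap Polynomial.natDegree_map_le
  -- P is primitive
  have hprim : P.IsPrimitive := by
    intro r hr
    obtain ⟨w, hw⟩ := hr
    rcases hPprime.irreducible.isUnit_or_isUnit hw with h1 | h2
    · exact Polynomial.isUnit_C.mp h1
    · exfalso
      have hw0 : w.natDegree = 0 := Polynomial.natDegree_eq_zero_of_isUnit h2
      have : P.natDegree ≤ 0 := by
        calc P.natDegree ≤ (Polynomial.C r).natDegree + w.natDegree := hw ▸ Polynomial.natDegree_mul_le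
        _ = 0 := by simp [hw0]
      omega
  -- move to fraction field
  set K := FractionRing S with hK
  have hinj : Function.Injective (algebraMap S K) := IsFractionRing.injective S K
  have hinjX : Function.Injective (Polynomial.map (algebraMap S K)) :=
    Polynomial.map_injective _ hinj
  have hsmul : ∀ (r : S) (W : Polynomial K), r • W = Polynomial.C (algebraMap S K r) * W := by
    intro r W
    ext m
    simp [Polynomial.coeff_smul, Polynomial.coeff_C_mul, Algebra.smul_def]
  have hPirrK : Irreducible (P.map (algebraMap S K)) :=
    (hprim.irreducible_iff_irreducible_map_fraction_map).mp hPprime.irreducible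
  have hndvdK : ¬ (P.map (algebraMap S K)) ∣ (H.map (algebraMap S K)) := by
    rintro ⟨W, hW⟩
    obtain ⟨dW, hdW⟩ := IsLocalization.integerNormalization_map_to_map (nonZeroDivisors S) W
    set intW := IsLocalization.integerNormalization (nonZeroDivisors S) W with hintW
    have hdW0 : (dW : S) ≠ 0 := nonZeroDivisors.coe_ne_zero dW
    have hmapeq : Polynomial.map (algebraMap S K) (Polynomial.C (dW : S) * H)
        = Polynomial.map (algebraMap S K) (P * intW) := by
      rw [Polynomial.map_mul, Polynomial.map_mul, Polynomial.map_C, hdW, hsmul, hW]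
      ring
    have heq : Polynomial.C (dW : S) * H = P * intW := hinjX hmapeq
    have : P ∣ Polynomial.C (dW : S) * H := ⟨intW, heq⟩
    rcases hPprime.dvd_mul.mp this with h1 | h2
    · have hC0 : (Polynomial.C (dW : S)) ≠ 0 := by simp [hdW0]
      have := Polynomial.natDegree_le_of_dvd h1 hC0
      simp [Polynomial.natDegree_C] at this
      omega
    · exact hdvd (by
        have : p ∣ h ↔ P ∣ H := by
          constructor
          · rintro ⟨w, hw⟩; exact ⟨φ w, by rw [hPdef, hHdef, hw, map_mul]⟩
          · rintro ⟨w, hw⟩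
            refine ⟨φ.symm w, ?_⟩
            have := congrArg φ.symm hw
            rw [map_mul] at this
            simpa [hPdef, hHdef] using this
        exact this.mpr h2)
  have hcop : IsCoprime (P.map (algebraMap S K)) (H.map (algebraMap S K)) :=
    (hPirrK.coprime_iff_not_dvd).mpr hndvdK
  obtain ⟨A, B, hAB⟩ := hcop
  obtain ⟨dA, hdA⟩ := IsLocalization.integerNormalization_map_to_map (nonZeroDivisors S) A
  obtain ⟨dB, hdB⟩ := IsLocalization.integerNormalization_map_to_map (nonZeroDivisors S) B
  set intA := IsLocalization.integerNormalization (nonZeroDivisors S) A with hintA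
  set intB := IsLocalization.integerNormalization (nonZeroDivisors S) B with hintB
  set r : S := (dA : S) * (dB : S) with hr
  have hr0 : r ≠ 0 := mul_ne_zero (nonZeroDivisors.coe_ne_zero dA) (nonZeroDivisors.coe_ne_zero dB)
  have hE : Polynomial.C (dB : S) * intA * P + Polynomial.C (dA : S) * intB * H = Polynomial.C r := by
    apply hinjX
    rw [Polynomial.map_add, Polynomial.map_mul, Polynomial.map_mul, Polynomial.map_mul,
      Polynomial.map_mul, Polynomial.map_C, Polynomial.map_C, Polynomial.map_C, hdA, hdB,
      hsmul, hsmul, hr, map_mul]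
    have : Polynomial.C (algebraMap S K (dB : S)) * (Polynomial.C (algebraMap S K (dA : S)) * A) * Polynomial.map (algebraMap S K) P
        + Polynomial.C (algebraMap S K (dA : S)) * (Polynomial.C (algebraMap S K (dB : S)) * B) * Polynomial.map (algebraMap S K) H
        = Polynomial.C (algebraMap S K (dA : S)) * Polynomial.C (algebraMap S K (dB : S))
          * (A * Polynomial.map (algebraMap S K) P + B * Polynomial.map (algebraMap S K) H) := by ring
    rw [this, hAB, mul_one, Polynomial.C_mul]
  -- the open set
  set U : Set (Fin n → ℝ) := {c' | 0 < eval (Fin.cons t₁ c') p ∧ eval (Fin.cons t₂ c') p < 0} with hU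
  have hUopen : IsOpen U := by
    have c1 : Continuous (fun c' : Fin n → ℝ => eval (Fin.cons t₁ c') p) :=
      (MvPolynomial.continuous_eval p).comp (continuous_pi (fun i => by
        refine Fin.cases ?_ ?_ i
        · exact continuous_const
        · intro j; exact continuous_apply j))
    have c2 : Continuous (fun c' : Fin n → ℝ => eval (Fin.cons t₂ c') p) :=
      (MvPolynomial.continuous_eval p).comp (continuous_pi (fun i => by
        refine Fin.cases ?_ ?_ i
        · exact continuous_const
        · intro j; exact continuous_apply j))
    exact (isOpen_lt continuous_const c1).inter (isOpen_lt c2 continuous_const)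
  have hcU : c ∈ U := ⟨hp1, hp2⟩
  have hvanr : ∀ c' ∈ U, eval c' r = 0 := by
    intro c' hc'
    obtain ⟨hc1, hc2⟩ := hc'
    set u : Polynomial ℝ := P.map (eval c') with hu
    have e1 : Polynomial.eval t₁ u = eval (Fin.cons t₁ c') p := (eval_eq_eval_mv_eval' c' t₁ p).symm
    have e2 : Polynomial.eval t₂ u = eval (Fin.cons t₂ c') p := (eval_eq_eval_mv_eval' c' t₂ p).symm
    have hmem : (0:ℝ) ∈ Set.uIcc (Polynomial.eval t₁ u) (Polynomial.eval t₂ u) := by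
      rw [e1, e2, Set.mem_uIcc]; right; constructor <;> linarith
    obtain ⟨t₀, _, ht₀⟩ := intermediate_value_uIcc ((Polynomial.continuous u).continuousOn) hmem
    simp only at ht₀
    have hP0 : Polynomial.eval t₀ (P.map (eval c')) = 0 := ht₀
    have hproot : eval (Fin.cons t₀ c') p = 0 := by rw [eval_eq_eval_mv_eval']; exact hP0
    have hH0 : Polynomial.eval t₀ (H.map (eval c')) = 0 := by
      rw [← eval_eq_eval_mv_eval' c' t₀ h]
      exact hvan _ hproot
    have := congrArg (fun q : Polynomial S => Polynomial.eval t₀ (Polynomial.map (eval c') q)) hE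
    simp only [Polynomial.map_add, Polynomial.map_mul, Polynomial.map_C, Polynomial.eval_add,
      Polynomial.eval_mul, Polynomial.eval_C, hP0, hH0, mul_zero, add_zero, zero_add] at this
    exact this.symm ▸ rfl
  have : r = 0 := eq_zero_of_eval_zero_on_open r U hUopen c hcU hvanr
  exact hr0 this

/-- An indefinite polynomial changes sign along some coordinate axis, at suitable points. -/
lemma exists_axis_sign_change {d : ℕ} (p : MvPolynomial (Fin d) ℝ)
    (hind : IsIndefinite p) :
    ∃ (i : Fin d) (x : Fin d → ℝ) (t₁ t₂ : ℝ),
      0 < eval (Function.update x i t₁) p ∧ eval (Function.update x i t₂) p < 0 := by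
  classical
  obtain ⟨⟨a, ha⟩, ⟨b, hb⟩⟩ := hind
  have hp0 : p ≠ 0 := by rintro rfl; simp at ha
  set g : ℕ → Fin d → (Fin d ⊕ Fin d) := fun k j => if (j:ℕ) < k then Sum.inr j else Sum.inl j with hg
  have hginj : ∀ k, Function.Injective (g k) := by
    intro k j₁ j₂ hj
    simp only [hg] at hj
    by_cases h1 : (j₁:ℕ) < k <;> by_cases h2 : (j₂:ℕ) < k <;>
      simp [h1, h2] at hj <;> exact hj
  set Q : MvPolynomial (Fin d ⊕ Fin d) ℝ := ∏ k ∈ Finset.range (d+1), rename (g k) p with hQ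
  have hQ0 : Q ≠ 0 := by
    rw [hQ, Finset.prod_ne_zero_iff]
    intro k _
    exact fun hc => hp0 (rename_injective _ (hginj k) (by rw [hc, map_zero]))
  set O : Set (Fin d ⊕ Fin d → ℝ) :=
    {z | 0 < eval (z ∘ Sum.inl) p ∧ eval (z ∘ Sum.inr) p < 0} with hO
  have hOopen : IsOpen O := by
    have c1 : Continuous (fun z : Fin d ⊕ Fin d → ℝ => eval (z ∘ Sum.inl) p) :=
      (MvPolynomial.continuous_eval p).comp (continuous_pi (fun i => continuous_apply _))
    have c2 : Continuous (fun z : Fin d ⊕ Fin d → ℝ => eval (z ∘ Sum.inr) p) :=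
      (MvPolynomial.continuous_eval p).comp (continuous_pi (fun i => continuous_apply _))
    exact (isOpen_lt continuous_const c1).inter (isOpen_lt c2 continuous_const)
  have hz₀ : (Sum.elim a b : Fin d ⊕ Fin d → ℝ) ∈ O := by
    constructor
    · convert ha using 2
      rfl
    · convert hb using 2
      rfl
  obtain ⟨z, hzO, hzQ⟩ : ∃ z ∈ O, eval z Q ≠ 0 := by
    by_contra hcon
    push_neg at hcon
    exact hQ0 (eq_zero_of_eval_zero_on_open Q O hOopen _ hz₀ hcon)
  set a' : Fin d → ℝ := z ∘ Sum.inl with ha'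
  set b' : Fin d → ℝ := z ∘ Sum.inr with hb'
  set v : ℕ → Fin d → ℝ := fun k j => if (j:ℕ) < k then b' j else a' j with hv
  have hvk : ∀ k ≤ d, eval (v k) p ≠ 0 := by
    intro k hk hvz
    apply hzQ
    rw [hQ, map_prod]
    apply Finset.prod_eq_zero (Finset.mem_range.mpr (Nat.lt_succ_of_le hk))
    rw [eval_rename]
    have hzg : z ∘ g k = v k := by
      funext j
      simp only [Function.comp_apply, hg, hv]
      by_cases hj : (j:ℕ) < k <;> simp [hj, ha', hb']
    rw [hzg]
    exact hvz
  have hv0 : v 0 = a' := by funext j; simp [hv]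
  have hvd : v d = b' := by funext j; simp [hv, j.isLt]
  have hvpos : 0 < eval (v 0) p := by rw [hv0]; exact hzO.1
  have hvneg : eval (v d) p < 0 := by rw [hvd]; exact hzO.2
  have hex : ∃ k, k ≤ d ∧ eval (v k) p < 0 := ⟨d, le_refl d, hvneg⟩
  set k₀ := Nat.find hex with hk₀
  obtain ⟨hk₀d, hk₀neg⟩ := Nat.find_spec hex
  rw [← hk₀] at hk₀d hk₀neg
  have hk₀pos : k₀ ≠ 0 := by
    intro h0
    rw [h0] at hk₀neg
    linarith
  set m := k₀ - 1 with hm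
  have hmlt : m < k₀ := Nat.sub_lt (Nat.pos_of_ne_zero hk₀pos) one_pos
  have hmd : m < d := lt_of_lt_of_le hmlt hk₀d
  have hnotneg : ¬ eval (v m) p < 0 := by
    intro hneg
    exact Nat.find_min hex hmlt ⟨le_of_lt hmd, hneg⟩
  have hne : eval (v m) p ≠ 0 := hvk m (le_of_lt hmd)
  have hmpos : 0 < eval (v m) p := by
    rcases lt_trichotomy (eval (v m) p) 0 with h | h | h
    · exact absurd h hnotneg
    · exact absurd h hne
    · exact h
  have hm1 : m + 1 = k₀ := Nat.succ_pred_eq_of_pos (Nat.pos_of_ne_zero hk₀pos)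
  have hm1neg : eval (v (m+1)) p < 0 := by rw [hm1]; exact hk₀neg
  refine ⟨⟨m, hmd⟩, v m, a' ⟨m, hmd⟩, b' ⟨m, hmd⟩, ?_, ?_⟩
  · have : Function.update (v m) ⟨m, hmd⟩ (a' ⟨m, hmd⟩) = v m := by
      apply Function.update_eq_self_iff.mpr
      simp [hv]
    rw [this]; exact hmpos
  · have : Function.update (v m) ⟨m, hmd⟩ (b' ⟨m, hmd⟩) = v (m+1) := by
      funext j
      rcases eq_or_ne j ⟨m, hmd⟩ with rfl | hj
      · simp [hv]
      · rw [Function.update_of_ne hj]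
        have hjm : (j : ℕ) ≠ m := fun hc => hj (Fin.ext hc)
        simp only [hv]
        by_cases hlt : (j:ℕ) < m
        · have h2 : (j:ℕ) < m + 1 := by omega
          simp [hlt, h2]
        · have h2 : ¬ (j:ℕ) < m + 1 := by omega
          simp [hlt, h2]
    rw [this]; exact hm1neg

/-- An irreducible indefinite polynomial divides every polynomial vanishing on
its real zero set. -/
lemma dvd_of_vanishing {d : ℕ} (p h : MvPolynomial (Fin d) ℝ)
    (hirr : Irreducible p) (hind : IsIndefinite p)
    (hvan : ∀ x, eval x p = 0 → eval x h = 0) : p ∣ h := by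
  classical
  by_contra hdvd
  obtain ⟨i, x, t₁, t₂, hpos, hneg⟩ := exists_axis_sign_change p hind
  cases d with
  | zero => exact i.elim0
  | succ n =>
    set e : Equiv.Perm (Fin (n+1)) := Equiv.swap 0 i with he
    set ψ := MvPolynomial.renameEquiv ℝ e with hψ
    set p' : MvPolynomial (Fin (n+1)) ℝ := rename e p with hp'
    set h' : MvPolynomial (Fin (n+1)) ℝ := rename e h with hh'
    have hp'prime : Prime p' :=
      (MulEquiv.prime_iff ψ.toRingEquiv.toMulEquiv).mpr
        (UniqueFactorizationMonoid.irreducible_iff_prime.mp hirr)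
    have hdvd' : ¬ p' ∣ h' := by
      intro hd
      apply hdvd
      have := map_dvd_iff (ψ.toRingEquiv.toMulEquiv) (a := p) (b := h)
      exact this.mp hd
    have hvan' : ∀ y, eval y p' = 0 → eval y h' = 0 := by
      intro y hy
      rw [hp', eval_rename] at hy
      rw [hh', eval_rename]
      exact hvan _ hy
    set c : Fin n → ℝ := fun j => if (j.succ : Fin (n+1)) = i then x 0 else x j.succ with hc
    have hkey : ∀ t : ℝ, (Fin.cons t c : Fin (n+1) → ℝ) ∘ e = Function.update x i t := by
      intro t
      funext w
      simp only [Function.comp_apply, he]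
      rcases eq_or_ne w i with rfl | hwi
      · rw [Equiv.swap_apply_right]
        simp [Function.update_self, Fin.cons_zero]
      · rcases eq_or_ne w 0 with rfl | hw0
        · rw [Equiv.swap_apply_left, Function.update_of_ne hwi]
          have hi0 : i ≠ 0 := fun hc0 => hwi hc0.symm
          obtain ⟨j, hj⟩ := Fin.exists_succ_eq.mpr hi0
          rw [← hj, Fin.cons_succ]
          simp [hc, hj]
        · rw [Equiv.swap_apply_of_ne_of_ne hw0 hwi, Function.update_of_ne hwi]
          obtain ⟨j, hj⟩ := Fin.exists_succ_eq.mpr hw0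
          rw [← hj, Fin.cons_succ]
          simp only [hc]
          rw [if_neg (by rw [hj]; exact hwi)]
    have hpos' : 0 < eval (Fin.cons t₁ c : Fin (n+1) → ℝ) p' := by
      rw [hp', eval_rename, hkey]
      exact hpos
    have hneg' : eval (Fin.cons t₂ c : Fin (n+1) → ℝ) p' < 0 := by
      rw [hp', eval_rename, hkey]
      exact hneg
    exact key_lemma p' h' hp'prime hdvd' hvan' hpos' hneg'

/-- Removing the square of an irreducible indefinite factor preserves being SOS. -/
lemma isSOS_of_mul_sq {d : ℕ} (p G : MvPolynomial (Fin d) ℝ)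
    (hirr : Irreducible p) (hind : IsIndefinite p)
    (hsos : IsSOS (p ^ 2 * G)) : IsSOS G := by
  classical
  obtain ⟨k, h, hk⟩ := hsos
  have hp0 : p ≠ 0 := by
    rintro rfl
    obtain ⟨⟨a, ha⟩, -⟩ := hind
    simp at ha
  have hvan : ∀ i x, eval x p = 0 → eval x (h i) = 0 := by
    intro i x hx
    have hh := congrArg (eval x) hk
    simp only [map_sum, map_mul, map_pow, hx] at hh
    rw [zero_pow (by norm_num), zero_mul] at hh
    have hsum := Finset.sum_eq_zero_iff_of_nonneg
      (fun j (_ : j ∈ Finset.univ) => sq_nonneg (eval x (h j))) |>.mp hh.symm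
    have := hsum i (Finset.mem_univ i)
    exact pow_eq_zero_iff (by norm_num) |>.mp this
  have hdvd : ∀ i, p ∣ h i := fun i =>
    dvd_of_vanishing p (h i) hirr hind (fun x hx => hvan i x hx)
  choose g hg using hdvd
  have hk2 : p ^ 2 * G = p ^ 2 * ∑ i, (g i) ^ 2 := by
    rw [hk, Finset.mul_sum]
    apply Finset.sum_congr rfl
    intro i _
    rw [hg i]
    ring
  have := mul_left_cancel₀ (pow_ne_zero 2 hp0) hk2
  exact ⟨k, g, this⟩

theorem no_indefinite_artin_denominator
    {d n m : ℕ} (F s : MvPolynomial (Fin d) ℝ)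
    (hFhom : F.IsHomogeneous n)
    (hFpsd : ∀ x : Fin d → ℝ, 0 ≤ eval x F)
    (hFnotsos : ¬ IsSOS F)
    (hshom : s.IsHomogeneous m)
    (hsF : IsSOS (s ^ 2 * F))
    (hfac : ∀ r : MvPolynomial (Fin d) ℝ, Irreducible r → r ∣ s → IsIndefinite r) :
    False := by
  classical
  cases d with
  | zero =>
    apply hFnotsos
    set a : ℝ := eval (Fin.elim0 : Fin 0 → ℝ) F with haval
    have ha : 0 ≤ a := hFpsd _
    refine ⟨1, fun _ => C (Real.sqrt a), ?_⟩
    apply MvPolynomial.funext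
    intro x
    have hx : x = (Fin.elim0 : Fin 0 → ℝ) := by funext i; exact i.elim0
    rw [hx]
    simp [Real.sq_sqrt ha, ← haval]
  | succ N =>
    have main : ∀ s' : MvPolynomial (Fin (N+1)) ℝ,
        (∀ r, Irreducible r → r ∣ s' → IsIndefinite r) →
        ∀ G, IsSOS (s' ^ 2 * G) → IsSOS G := by
      intro s'
      refine UniqueFactorizationMonoid.induction_on_prime
        (P := fun t => (∀ r, Irreducible r → r ∣ t → IsIndefinite r) →
          ∀ G, IsSOS (t ^ 2 * G) → IsSOS G) s' ?_ ?_ ?_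
      · -- s' = 0 : impossible since then every irreducible would be indefinite
        intro hfac0 G _
        exfalso
        set q : MvPolynomial (Fin (N+1)) ℝ := X 0 ^ 2 + 1 with hq
        have hqpos : ∀ x : Fin (N+1) → ℝ, 0 < eval x q := by
          intro x
          simp only [hq, map_add, map_pow, map_one, eval_X]
          positivity
        have hq0 : q ≠ 0 := by
          intro hc
          have := hqpos 0
          rw [hc] at this
          simp at this
        have hqnu : ¬ IsUnit q := by
          intro hu
          have hu2 := hu.map (MvPolynomial.finSuccEquiv ℝ N)
          have hφq : MvPolynomial.finSuccEquiv ℝ N q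
              = Polynomial.X ^ 2 + Polynomial.C 1 := by
            simp [hq, MvPolynomial.finSuccEquiv_X_zero]
          rw [hφq] at hu2
          have hdeg := Polynomial.natDegree_eq_zero_of_isUnit hu2
          rw [Polynomial.natDegree_X_pow_add_C] at hdeg
          omega
        obtain ⟨r, hr, hrdvd⟩ := WfDvdMonoid.exists_irreducible_factor hqnu hq0
        have hind := hfac0 r hr (dvd_zero r)
        obtain ⟨⟨xa, hxa⟩, ⟨xb, hxb⟩⟩ := hind
        obtain ⟨x0, hx0⟩ := exists_eval_zero_of_sign_change r hxa hxb
        obtain ⟨w, hw⟩ := hrdvd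
        have hqx := hqpos x0
        rw [hw, map_mul, hx0, zero_mul] at hqx
        exact lt_irrefl 0 hqx
      · -- units
        intro u hu _ G hsos
        obtain ⟨k, hfun, hk⟩ := hsos
        obtain ⟨v, hv⟩ : ∃ v, u * v = 1 := ⟨↑hu.unit⁻¹, by simp [IsUnit.mul_val_inv]⟩
        refine ⟨k, fun i => v * hfun i, ?_⟩
        have hG : G = v ^ 2 * (u ^ 2 * G) := by
          rw [← mul_assoc, ← mul_pow, mul_comm v u, hv]
          ring
        rw [hG, hk, Finset.mul_sum]
        apply Finset.sum_congr rfl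
        intro i _
        ring
      · -- prime step
        intro a pp ha hpp IH hfac G hsos
        have hppirr : Irreducible pp := hpp.irreducible
        have hppind : IsIndefinite pp := hfac pp hppirr (Dvd.intro a rfl)
        have h1 : IsSOS (pp ^ 2 * (a ^ 2 * G)) := by
          have : pp ^ 2 * (a ^ 2 * G) = (pp * a) ^ 2 * G := by ring
          rw [this]
          exact hsos
        have h2 := isSOS_of_mul_sq pp _ hppirr hppind h1
        exact IH (fun r hr hd => hfac r hr (hd.mul_left pp)) G h2
    exact hFnotsos (main s hfac F hsF)
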